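/- For every integer n with 0 ≤ n ≤ l−1, let N_{l−1} := {(Δ(c), −c) : c ∈ I^{l−1}} ⊆ (x^{l−1}·B) ⊕ I^n (note I^{l−1} ⊆ I^n). Then the quotient A-module ((x^{l−1}·B) ⊕ I^n)/N_{l−1} is isomorphic to I^n as an A-module. -/

import Mathlib

open MvPolynomial

set_option maxHeartbeats 800000
set_option synthInstance.maxHeartbeats 200000

noncomputable section

/-- `A = ℤ[x,y]/(x^l − y^l)`, with `x = X 0`, `y = X 1`. -/
def IA (l : ℕ) : Ideal (MvPolynomial (Fin 2) ℤ) := Ideal.span {X 0 ^ l - X 1 ^ l}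

/-- `B = ℤ[x,t]/(t^l − 1)`, with `x = X 0`, `t = X 1`. -/
def IB (l : ℕ) : Ideal (MvPolynomial (Fin 2) ℤ) := Ideal.span {X 1 ^ l - 1}

abbrev Aq (l : ℕ) := MvPolynomial (Fin 2) ℤ ⧸ IA l
abbrev Bq (l : ℕ) := MvPolynomial (Fin 2) ℤ ⧸ IB l

/-- The class of `x` in `A`. -/
def xA (l : ℕ) : Aq l := Ideal.Quotient.mk (IA l) (X 0)
/-- The class of `y` in `A`. -/
def yA (l : ℕ) : Aq l := Ideal.Quotient.mk (IA l) (X 1)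
/-- The class of `x` in `B`. -/
def xB (l : ℕ) : Bq l := Ideal.Quotient.mk (IB l) (X 0)
/-- The class of `t` in `B`. -/
def tB (l : ℕ) : Bq l := Ideal.Quotient.mk (IB l) (X 1)

lemma tB_pow (l : ℕ) : tB l ^ l = 1 := by
  have h : (X 1 ^ l - 1 : MvPolynomial (Fin 2) ℤ) ∈ IB l := Ideal.subset_span rfl
  have h2 : Ideal.Quotient.mk (IB l) (X 1 ^ l - 1) = 0 :=
    Ideal.Quotient.eq_zero_iff_mem.mpr h
  have h3 : tB l ^ l - 1 = 0 := by
    rw [tB, ← map_pow, ← map_one (Ideal.Quotient.mk (IB l)), ← map_sub]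
    simpa using h2
  exact sub_eq_zero.mp h3

/-- The diagonal ring homomorphism `Δ : A → B`, determined by `x ↦ x`, `y ↦ t·x`. -/
def Δmap (l : ℕ) : Aq l →+* Bq l :=
  Ideal.Quotient.lift (IA l) ((aeval ![xB l, tB l * xB l]).toRingHom)
    (by
      intro p hp
      obtain ⟨c, rfl⟩ := Ideal.mem_span_singleton'.mp hp
      have key : (aeval ![xB l, tB l * xB l]) (X 0 ^ l - X 1 ^ l : MvPolynomial (Fin 2) ℤ) = 0 := by
        simp [mul_pow, tB_pow l]
      simp only [AlgHom.toRingHom_eq_coe, RingHom.coe_coe, map_mul, key, mul_zero])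

lemma Δmap_xA (l : ℕ) : Δmap l (xA l) = xB l := by
  simp [Δmap, xA]

lemma Δmap_yA (l : ℕ) : Δmap l (yA l) = tB l * xB l := by
  simp [Δmap, yA]

/-- The ideal `I = (x, y) ⊆ A`. -/
def Iid (l : ℕ) : Ideal (Aq l) := Ideal.span {xA l, yA l}

/-- `B` is an `A`-algebra (hence an `A`-module) via `Δ`. -/
instance instAlgAB (l : ℕ) : Algebra (Aq l) (Bq l) := (Δmap l).toAlgebra

/-- The `A`-submodule `x^m·B = {x^m·b : b ∈ B}` of `B`. -/
def xmB (l m : ℕ) : Submodule (Aq l) (Bq l) :=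
  LinearMap.range (LinearMap.mulLeft (Aq l) (xB l ^ m))

instance instACGxmB (l m : ℕ) : AddCommGroup ↥(xmB l m) := Submodule.addCommGroup _

/-- The submodule `N_m = {(Δ(c), −c) : c ∈ I^m}` of `(x^m·B) ⊕ I^a`.  (The displayed set is
already an `A`-submodule, so taking its span does not change it.) -/
def Nsub (l a m : ℕ) : Submodule (Aq l) (↥(xmB l m) × ↥(Iid l ^ a)) :=
  Submodule.span (Aq l)
    {p | ∃ c ∈ Iid l ^ m, (p.1 : Bq l) = Δmap l c ∧ (p.2 : Aq l) = -c}

/-- The `A`-module `τ_{a,m} = ((x^m·B) ⊕ I^a)/N_m` of the paper. -/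
abbrev τmod (l a m : ℕ) := (↥(xmB l m) × ↥(Iid l ^ a)) ⧸ Nsub l a m

namespace Stmt13Aux


/-- `x` is inner (base ring `ℤ[x]`), `y`/`t` is the outer variable. -/
def E : MvPolynomial (Fin 2) ℤ ≃ₐ[ℤ] Polynomial (Polynomial ℤ) :=
  (renameEquiv ℤ (Equiv.swap 0 1)).trans ((finSuccEquiv ℤ 1).trans
    (Polynomial.mapAlgEquiv ((finSuccEquiv ℤ 0).trans
      (Polynomial.mapAlgEquiv (isEmptyAlgEquiv ℤ (Fin 0))))))

lemma E_X0 : E (X 0) = Polynomial.C Polynomial.X := by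
  have h1 : ((1 : Fin 2)) = (0 : Fin 1).succ := rfl
  simp only [E, AlgEquiv.trans_apply, renameEquiv_apply, rename_X, Equiv.swap_apply_left, h1,
    finSuccEquiv_X_succ, Polynomial.coe_mapAlgEquiv, Polynomial.map_C, AlgEquiv.coe_ringEquiv,
    finSuccEquiv_X_zero, Polynomial.map_X]
  congr 1
  simp [finSuccEquiv_X_zero]

lemma E_X1 : E (X 1) = Polynomial.X := by
  simp only [E, AlgEquiv.trans_apply, renameEquiv_apply, rename_X, Equiv.swap_apply_right,
    finSuccEquiv_X_zero, Polynomial.coe_mapAlgEquiv, Polynomial.map_X]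

/-- the substitution `x ↦ x`, `y ↦ x·y` on `ℤ[x,y]`. -/
def φ' : MvPolynomial (Fin 2) ℤ →ₐ[ℤ] MvPolynomial (Fin 2) ℤ := aeval ![X 0, X 0 * X 1]

/-- substitution `X ↦ C x · X` on `ℤ[x][X]`. -/
def G : Polynomial (Polynomial ℤ) →ₐ[ℤ] Polynomial (Polynomial ℤ) :=
  (Polynomial.aeval (Polynomial.C Polynomial.X * Polynomial.X)).restrictScalars ℤ

lemma G_apply (q : Polynomial (Polynomial ℤ)) :
    G q = q.comp (Polynomial.C Polynomial.X * Polynomial.X) := by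
  rw [Polynomial.comp, G, AlgHom.restrictScalars_apply, Polynomial.aeval_def,
    Polynomial.eval₂_eq_eval_map, Polynomial.eval₂_eq_eval_map, Polynomial.algebraMap_eq]

lemma φ'_X0 : φ' (X 0) = X 0 := by simp [φ']
lemma φ'_X1 : φ' (X 1) = X 0 * X 1 := by simp [φ']
lemma G_CX : G (Polynomial.C Polynomial.X) = Polynomial.C Polynomial.X := by
  rw [G_apply, Polynomial.C_comp]
lemma G_X : G Polynomial.X = Polynomial.C Polynomial.X * Polynomial.X := by
  rw [G_apply, Polynomial.X_comp]

lemma E_φ'_X (i : Fin 2) : E (φ' (X i)) = G (E (X i)) := by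
  fin_cases i
  · show E (φ' (X 0)) = G (E (X 0))
    rw [φ'_X0, E_X0, G_CX]
  · show E (φ' (X 1)) = G (E (X 1))
    rw [φ'_X1, E_X1, map_mul, E_X0, E_X1, G_X]

lemma E_φ' (p : MvPolynomial (Fin 2) ℤ) : E (φ' p) = G (E p) := by
  induction p using MvPolynomial.induction_on with
  | C a =>
    have hca : (C a : MvPolynomial (Fin 2) ℤ) = (a : MvPolynomial (Fin 2) ℤ) := by
      rw [show ((a : ℤ) : MvPolynomial (Fin 2) ℤ) = algebraMap ℤ _ a by simp]
      rfl
    rw [hca]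
    simp only [map_intCast]
  | add p q hp hq => simp only [map_add, hp, hq]
  | mul_X p i hp => simp only [map_mul, hp, E_φ'_X i]


/-- key polynomial lemma: if `q(x, x·X) ∈ (X^l − 1)` then `q ∈ (X^l − x^l)`. -/
lemma poly_key {l : ℕ} (hl : 1 ≤ l) (q : Polynomial (Polynomial ℤ))
    (h : ∃ d, q.comp (Polynomial.C Polynomial.X * Polynomial.X)
      = d * ((Polynomial.X : Polynomial (Polynomial ℤ)) ^ l - 1)) :
    ∃ w, q = ((Polynomial.X : Polynomial (Polynomial ℤ)) ^ l
      - Polynomial.C (Polynomial.X ^ l)) * w := by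
  classical
  set R := Polynomial ℤ
  set u : Polynomial R := Polynomial.C Polynomial.X * Polynomial.X with hu
  set f : Polynomial R := Polynomial.X ^ l - Polynomial.C (Polynomial.X ^ l) with hf
  have hlne : l ≠ 0 := by omega
  have hmf : f.Monic := Polynomial.monic_X_pow_sub_C _ hlne
  have hfl : f.natDegree = l := Polynomial.natDegree_X_pow_sub_C
  have hXl1 : ((Polynomial.X : Polynomial R) ^ l - 1) ≠ 0 := by
    have : ((Polynomial.X : Polynomial R) ^ l - 1) = Polynomial.X ^ l - Polynomial.C 1 := by simp
    rw [this]
    exact (Polynomial.monic_X_pow_sub_C _ hlne).ne_zero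
  have hXl1deg : ((Polynomial.X : Polynomial R) ^ l - 1).natDegree = l := by
    have : ((Polynomial.X : Polynomial R) ^ l - 1) = Polynomial.X ^ l - Polynomial.C 1 := by simp
    rw [this, Polynomial.natDegree_X_pow_sub_C]
  have hu1 : u.natDegree = 1 := by
    rw [hu, Polynomial.natDegree_C_mul Polynomial.X_ne_zero, Polynomial.natDegree_X]
  -- decompose q
  obtain ⟨d, hd⟩ := h
  set r : Polynomial R := q %ₘ f with hr
  have hqid : r + f * (q /ₘ f) = q := Polynomial.modByMonic_add_div q f
  -- f.comp u = C(x^l) * (X^l - 1)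
  have hfcomp : f.comp u = Polynomial.C (Polynomial.X ^ l) *
      ((Polynomial.X : Polynomial R) ^ l - 1) := by
    rw [hf, hu, Polynomial.sub_comp, Polynomial.pow_comp, Polynomial.C_comp, Polynomial.X_comp,
      mul_pow, ← Polynomial.C_pow]
    ring
  have hrcomp : ∃ d', r.comp u = d' * ((Polynomial.X : Polynomial R) ^ l - 1) := by
    refine ⟨d - (q /ₘ f).comp u * Polynomial.C (Polynomial.X ^ l), ?_⟩
    have := congrArg (fun z => Polynomial.comp z u) hqid
    simp only [Polynomial.add_comp, Polynomial.mul_comp] at this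
    rw [hfcomp] at this
    rw [sub_mul, ← hd]
    rw [← this]
    ring
  have hr0 : r = 0 := by
    by_contra hne
    obtain ⟨d', hd'⟩ := hrcomp
    have hcompne : r.comp u ≠ 0 := by
      intro h0
      rcases Polynomial.comp_eq_zero_iff.mp h0 with h1 | ⟨_, h2⟩
      · exact hne h1
      · have : u.natDegree = 0 := by rw [h2]; simp
        omega
    have hd'ne : d' ≠ 0 := by
      intro h0; rw [h0, zero_mul] at hd'; exact hcompne hd'
    have hdeg1 : (r.comp u).natDegree = r.natDegree := by
      rw [Polynomial.natDegree_comp, hu1, mul_one]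
    have hdeg2 : (r.comp u).natDegree = d'.natDegree + l := by
      rw [hd', Polynomial.natDegree_mul hd'ne hXl1, hXl1deg]
    have hrlt : r.natDegree < l := by
      have := Polynomial.degree_modByMonic_lt q hmf
      rw [← hr] at this
      have h2 : r.degree < (l : ℕ) := by
        rwa [Polynomial.degree_eq_natDegree hmf.ne_zero, hfl] at this
      exact (Polynomial.natDegree_lt_iff_degree_lt hne).mpr h2
    omega
  rw [hr0, zero_add] at hqid
  exact ⟨q /ₘ f, hqid.symm⟩



lemma mem_IA_of {l : ℕ} (hl : 1 ≤ l) (p : MvPolynomial (Fin 2) ℤ)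
    (h : φ' p ∈ IB l) : p ∈ IA l := by
  rw [IB, Ideal.mem_span_singleton'] at h
  obtain ⟨c, hc⟩ := h
  have h2 : E (φ' p) = E c * ((Polynomial.X : Polynomial (Polynomial ℤ)) ^ l - 1) := by
    rw [← hc, map_mul, map_sub, map_pow, E_X1, map_one]
  rw [E_φ', G_apply] at h2
  obtain ⟨w, hw⟩ := poly_key hl (E p) ⟨E c, h2⟩
  rw [IA, Ideal.mem_span_singleton']
  refine ⟨-(E.symm w), ?_⟩
  apply E.injective
  rw [map_mul, map_neg, E.apply_symm_apply, map_sub, map_pow, map_pow, E_X0, E_X1,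
    ← Polynomial.C_pow, hw]
  ring

lemma Δ_mk (l : ℕ) (p : MvPolynomial (Fin 2) ℤ) :
    Δmap l (Ideal.Quotient.mk (IA l) p) = Ideal.Quotient.mk (IB l) (φ' p) := by
  have h1 : Δmap l (Ideal.Quotient.mk (IA l) p) = aeval ![xB l, tB l * xB l] p := rfl
  have h2 : (Ideal.Quotient.mkₐ ℤ (IB l)).comp (aeval ![X 0, X 0 * X 1]) =
      aeval (fun i => Ideal.Quotient.mkₐ ℤ (IB l) (![X 0, X 0 * X 1] i)) :=
    MvPolynomial.comp_aeval ![X 0, X 0 * X 1] (Ideal.Quotient.mkₐ ℤ (IB l))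
  have h3 : (fun i => Ideal.Quotient.mkₐ ℤ (IB l) (![(X 0 : MvPolynomial (Fin 2) ℤ),
      X 0 * X 1] i)) = ![xB l, tB l * xB l] := by
    funext i
    fin_cases i <;> simp [xB, tB, mul_comm]
  have h4 : Ideal.Quotient.mk (IB l) (φ' p) =
      (Ideal.Quotient.mkₐ ℤ (IB l)).comp (aeval ![X 0, X 0 * X 1]) p := rfl
  rw [h1, h4, h2, h3]

lemma Δ_inj {l : ℕ} (hl : 1 ≤ l) : Function.Injective (Δmap l) := by
  intro a b hab
  obtain ⟨p, rfl⟩ := Ideal.Quotient.mk_surjective a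
  obtain ⟨q, rfl⟩ := Ideal.Quotient.mk_surjective b
  rw [Δ_mk, Δ_mk, Ideal.Quotient.eq] at hab
  rw [Ideal.Quotient.eq]
  rw [← map_sub] at hab
  exact mem_IA_of hl _ hab

lemma smul_def' (l : ℕ) (a : Aq l) (b : Bq l) : a • b = Δmap l a * b := rfl

/-- `Δ` as an `A`-linear map. -/
def Δlin (l : ℕ) : Aq l →ₗ[Aq l] Bq l := Algebra.linearMap (Aq l) (Bq l)

lemma Δlin_apply (l : ℕ) (a : Aq l) : Δlin l a = Δmap l a := rfl

lemma mem_xmB_iff {l m : ℕ} (b : Bq l) : b ∈ xmB l m ↔ ∃ b', xB l ^ m * b' = b := by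
  constructor
  · rintro ⟨b', rfl⟩; exact ⟨b', rfl⟩
  · rintro ⟨b', rfl⟩; exact ⟨b', rfl⟩

lemma Δ_I_mem (l : ℕ) : ∀ c ∈ Iid l, Δmap l c ∈ xmB l 1 := by
  have : Iid l ≤ Submodule.comap (Δlin l) (xmB l 1) := by
    rw [Iid, Ideal.span_le]
    rintro c (rfl | rfl)
    · exact Submodule.mem_comap.mpr ((mem_xmB_iff _).mpr ⟨1, by
        rw [pow_one, mul_one, Δlin_apply, Δmap_xA]⟩)
    · exact Submodule.mem_comap.mpr ((mem_xmB_iff _).mpr ⟨tB l, by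
        rw [pow_one, Δlin_apply, Δmap_yA]; ring⟩)
  exact fun c hc => this hc

lemma Δ_pow_mem (l : ℕ) (m : ℕ) : ∀ c ∈ Iid l ^ m, Δmap l c ∈ xmB l m := by
  induction m with
  | zero =>
    intro c _
    exact (mem_xmB_iff _).mpr ⟨Δmap l c, by rw [pow_zero, one_mul]⟩
  | succ m ih =>
    have : Iid l ^ m * Iid l ≤ Submodule.comap (Δlin l) (xmB l (m + 1)) := by
      rw [Ideal.mul_le]
      intro r hr s hs
      obtain ⟨b1, hb1⟩ := (mem_xmB_iff _).mp (ih r hr)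
      obtain ⟨b2, hb2⟩ := (mem_xmB_iff _).mp (Δ_I_mem l s hs)
      refine Submodule.mem_comap.mpr ((mem_xmB_iff _).mpr ⟨b1 * b2, ?_⟩)
      rw [Δlin_apply, map_mul, ← hb1, ← hb2]
      ring
    intro c hc
    rw [Ideal.IsTwoSided.pow_succ, Ideal.mul_comm] at hc
    exact this hc



lemma span_mul_tB (l : ℕ) (b : Bq l)
    (hb : b ∈ Submodule.span (Aq l) (Set.range fun j : ℕ => tB l ^ j)) :
    b * tB l ∈ Submodule.span (Aq l) (Set.range fun j : ℕ => tB l ^ j) := by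
  induction hb using Submodule.span_induction with
  | mem x hx =>
    obtain ⟨j, rfl⟩ := hx
    exact Submodule.subset_span ⟨j + 1, by show tB l ^ (j+1) = _; rw [pow_succ]⟩
  | zero => rw [zero_mul]; exact Submodule.zero_mem _
  | add x y hx hy ihx ihy => rw [add_mul]; exact add_mem ihx ihy
  | smul a x hx ih => rw [smul_mul_assoc]; exact Submodule.smul_mem _ _ ih

lemma span_mul_xB (l : ℕ) (b : Bq l)
    (hb : b ∈ Submodule.span (Aq l) (Set.range fun j : ℕ => tB l ^ j)) :
    b * xB l ∈ Submodule.span (Aq l) (Set.range fun j : ℕ => tB l ^ j) := by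
  induction hb using Submodule.span_induction with
  | mem x hx =>
    obtain ⟨j, rfl⟩ := hx
    have : tB l ^ j * xB l = xA l • tB l ^ j := by
      rw [smul_def', Δmap_xA]; ring
    rw [this]
    exact Submodule.smul_mem _ _ (Submodule.subset_span ⟨j, rfl⟩)
  | zero => rw [zero_mul]; exact Submodule.zero_mem _
  | add x y hx hy ihx ihy => rw [add_mul]; exact add_mem ihx ihy
  | smul a x hx ih => rw [smul_mul_assoc]; exact Submodule.smul_mem _ _ ih

lemma span_t_top (l : ℕ) :
    Submodule.span (Aq l) (Set.range fun j : ℕ => tB l ^ j) = ⊤ := by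
  rw [eq_top_iff]
  rintro b -
  obtain ⟨p, rfl⟩ := Ideal.Quotient.mk_surjective b
  induction p using MvPolynomial.induction_on with
  | C a =>
    have h1 : Ideal.Quotient.mk (IB l) (C a) =
        (Ideal.Quotient.mk (IA l) (C a)) • (1 : Bq l) := by
      rw [smul_def', mul_one, Δ_mk]
      congr 1
      simp [φ']
    rw [h1]
    exact Submodule.smul_mem _ _ (Submodule.subset_span ⟨0, by show tB l ^ 0 = _; rw [pow_zero]⟩)
  | add p q hp hq => rw [map_add]; exact add_mem hp hq
  | mul_X p i hp =>
    rw [map_mul]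
    fin_cases i
    · exact span_mul_xB l _ hp
    · exact span_mul_tB l _ hp

lemma xl1_mem (l : ℕ) (hl : 1 ≤ l) (b : Bq l) :
    xB l ^ (l - 1) * b ∈ Submodule.map (Δlin l) (Iid l ^ (l - 1)) := by
  have hb : b ∈ Submodule.span (Aq l) (Set.range fun j : ℕ => tB l ^ j) := by
    rw [span_t_top]; trivial
  induction hb using Submodule.span_induction with
  | mem x hx =>
    obtain ⟨j, rfl⟩ := hx
    have hrl : j % l < l := Nat.mod_lt _ (by omega)
    have hxm : xA l ∈ Iid l := Ideal.subset_span (Set.mem_insert _ _)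
    have hym : yA l ∈ Iid l := Ideal.subset_span (Set.mem_insert_of_mem _ rfl)
    refine ⟨xA l ^ (l - 1 - j % l) * yA l ^ (j % l), ?_, ?_⟩
    · have hmem := Ideal.mul_mem_mul (Ideal.pow_mem_pow hxm (l - 1 - j % l))
        (Ideal.pow_mem_pow hym (j % l))
      rw [← Ideal.IsTwoSided.pow_add] at hmem
      have ha : l - 1 - j % l + j % l = l - 1 := by omega
      rwa [ha] at hmem
    · show Δmap l (xA l ^ (l - 1 - j % l) * yA l ^ (j % l)) = xB l ^ (l - 1) * tB l ^ j
      have ht : tB l ^ j = tB l ^ (j % l) := by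
        conv_lhs => rw [← Nat.div_add_mod j l]
        rw [pow_add, pow_mul, tB_pow, one_pow, one_mul]
      have ha : l - 1 - j % l + j % l = l - 1 := by omega
      rw [map_mul, map_pow, map_pow, Δmap_xA, Δmap_yA, ht]
      conv_rhs => rw [← ha]
      ring
  | zero => rw [mul_zero]; exact Submodule.zero_mem _
  | add x y hx hy ihx ihy => rw [mul_add]; exact add_mem ihx ihy
  | smul a x hx ih => rw [mul_smul_comm]; exact Submodule.smul_mem _ _ ih

end Stmt13Aux

/-- For `0 ≤ n ≤ l−1`, the quotient `A`-module `τ_{n,l−1} = ((x^{l−1}·B) ⊕ I^n)/N_{l−1}` is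
isomorphic to `I^n` as an `A`-module. -/
theorem stmt_13 (l : ℕ) (hl : 1 ≤ l) (n : ℕ) (hn : n ≤ l - 1) :
    Nonempty (τmod l n (l - 1) ≃ₗ[Aq l] ↥(Iid l ^ n)) := by
  classical
  have h_le : (Iid l ^ (l - 1) : Ideal (Aq l)) ≤ Iid l ^ n := Ideal.pow_le_pow_right hn
  let Δres : ↥(Iid l ^ (l - 1)) →ₗ[Aq l] ↥(xmB l (l - 1)) :=
    LinearMap.codRestrict (xmB l (l - 1))
      ((Stmt13Aux.Δlin l).comp (Submodule.subtype (Iid l ^ (l - 1) : Ideal (Aq l))))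
      (fun c => Stmt13Aux.Δ_pow_mem l (l - 1) c.1 c.2)
  have hΔres_val : ∀ c, (Δres c : Bq l) = Δmap l (c : Aq l) := fun c => rfl
  have hbij : Function.Bijective Δres := by
    constructor
    · intro u v huv
      apply Subtype.ext
      apply Stmt13Aux.Δ_inj hl
      have h2 := congrArg Subtype.val huv
      rw [hΔres_val, hΔres_val] at h2
      exact h2
    · rintro ⟨b, hb⟩
      obtain ⟨b', rfl⟩ := (Stmt13Aux.mem_xmB_iff b).mp hb
      obtain ⟨c, hc, hΔ⟩ := Stmt13Aux.xl1_mem l hl b'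
      exact ⟨⟨c, hc⟩, Subtype.ext hΔ⟩
  let e := LinearEquiv.ofBijective Δres hbij
  let Φ : (↥(xmB l (l - 1)) × ↥(Iid l ^ n)) →ₗ[Aq l] ↥(Iid l ^ n) :=
    ((Submodule.inclusion h_le).comp (e.symm.toLinearMap.comp
      (LinearMap.fst (Aq l) ↥(xmB l (l - 1)) ↥(Iid l ^ n))))
      + LinearMap.snd (Aq l) ↥(xmB l (l - 1)) ↥(Iid l ^ n)
  have hΦ_apply : ∀ z : ↥(xmB l (l - 1)) × ↥(Iid l ^ n),
      (Φ z : Aq l) = ((e.symm z.1 : ↥(Iid l ^ (l - 1))) : Aq l) + (z.2 : Aq l) :=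
    fun z => rfl
  have hsurj : Function.Surjective Φ := by
    intro a
    refine ⟨(0, a), ?_⟩
    apply Subtype.ext
    rw [hΦ_apply]
    rw [map_zero]
    simp
  have hker : Nsub l n (l - 1) = LinearMap.ker Φ := by
    apply le_antisymm
    · rw [Nsub, Submodule.span_le]
      rintro ⟨b, a⟩ ⟨c, hc, h1, h2⟩
      simp only [SetLike.mem_coe, LinearMap.mem_ker]
      apply Subtype.ext
      rw [hΦ_apply]
      have hb : b = Δres ⟨c, hc⟩ := Subtype.ext (by rw [hΔres_val]; exact h1)
      have he : e.symm b = ⟨c, hc⟩ := by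
        rw [hb]
        exact e.symm_apply_apply ⟨c, hc⟩
      rw [he, h2]
      simp
    · rintro ⟨b, a⟩ hz
      have h0 : ((e.symm b : ↥(Iid l ^ (l - 1))) : Aq l) + (a : Aq l) = 0 := by
        have := congrArg Subtype.val (LinearMap.mem_ker.mp hz)
        rwa [hΦ_apply] at this
      refine Submodule.subset_span ⟨((e.symm b : ↥(Iid l ^ (l - 1))) : Aq l),
        (e.symm b).2, ?_, ?_⟩
      · have he : Δres (e.symm b) = b := e.apply_symm_apply b
        rw [← hΔres_val]
        exact (congrArg Subtype.val he).symm
      · exact eq_neg_of_add_eq_zero_left (by rw [add_comm]; exact h0)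
  exact ⟨(Submodule.quotEquivOfEq _ _ hker).trans
    (Φ.quotKerEquivOfSurjective hsurj)⟩
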